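/- Suppose q : ℕ → ℝ is non-decreasing with q_k ≥ 0 for all k and q_0 > 0, and that A > 0 satisfies n·q_{n-1} ≤ A·Q_n for all n ≥ 1. Then for every f ∈ L¹(G_m,μ), every n ≥ 1 and every x ∈ G_m, |T_n f(x)| ≤ 2A·σ*f(x); consequently T*f(x) ≤ 2A·σ*f(x) for every x ∈ G_m. -/

import Mathlib

open MeasureTheory Complex Finset ENNReal

noncomputable section

namespace VilenkinT

variable (m : ℕ → ℕ)

/-- The generalized powers `M_0 = 1`, `M_{k+1} = m_k M_k`. -/
def Mgen : ℕ → ℕ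
  | 0 => 1
  | k + 1 => m k * Mgen k

/-- The Vilenkin group (as a measurable space of coordinate sequences). -/
abbrev G := ∀ k : ℕ, Fin (m k)

/-- The `j`-th digit of `n` in the generalized number system based on `m`. -/
def digit (n j : ℕ) : ℕ := n / Mgen m j % m j

/-- The Vilenkin system `ψ_n(x) = ∏_k exp(2πi n_k x_k / m_k)`. -/
def psi (n : ℕ) (x : G m) : ℂ :=
  ∏' k : ℕ, Complex.exp (2 * Real.pi * Complex.I * (digit m n k : ℂ) * ((x k : ℕ) : ℂ) / (m k : ℂ))

/-- Partial sums of the Vilenkin–Fourier series built from coefficients `fhat`. -/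
def partialSum (fhat : ℕ → ℂ) (n : ℕ) (x : G m) : ℂ :=
  ∑ k ∈ Finset.range n, fhat k * psi m k x

/-- `Q_n := ∑_{k=0}^{n-1} q_k`. -/
def Qsum (q : ℕ → ℝ) (n : ℕ) : ℝ := ∑ k ∈ Finset.range n, q k

/-- The `T`-means `T_n f = (1/Q_n) ∑_{k=0}^{n-1} q_k S_k f`. -/
def Tmean (q : ℕ → ℝ) (fhat : ℕ → ℂ) (n : ℕ) (x : G m) : ℂ :=
  (1 / (Qsum q n : ℂ)) * ∑ k ∈ Finset.range n, (q k : ℂ) * partialSum m fhat k x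

/-- The maximal operator `T^* f = sup_{n ≥ 1} |T_n f|` (with values in `ℝ≥0∞`). -/
def Tstar (q : ℕ → ℝ) (fhat : ℕ → ℂ) (x : G m) : ℝ≥0∞ :=
  ⨆ (n : ℕ) (_ : 1 ≤ n), ENNReal.ofReal ((‖·‖) (Tmean m q fhat n x))

/-- The weak-`L_p` norm `sup_{t>0} t μ(g > t)^{1/p}` of an `ℝ≥0∞`-valued function. -/
def weakNorm (μ : Measure (G m)) (p : ℝ) (g : G m → ℝ≥0∞) : ℝ≥0∞ :=
  ⨆ (t : ℝ) (_ : 0 < t), ENNReal.ofReal t * (μ {x | ENNReal.ofReal t < g x}) ^ (1 / p)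

/-- The weak-`L_p` norm of a complex valued function. -/
def weakNormC (μ : Measure (G m)) (p : ℝ) (g : G m → ℂ) : ℝ≥0∞ :=
  weakNorm m μ p fun x => ENNReal.ofReal ((‖·‖) (g x))

/-- `μ` is the product of the uniform probability measures on the coordinates:
it is a probability measure giving each cylinder of length `n` measure `1/M_n`. -/
def IsHaar (μ : Measure (G m)) : Prop :=
  IsProbabilityMeasure μ ∧
    ∀ (n : ℕ) (x : G m), μ {y | ∀ i < n, y i = x i} = ((Mgen m n : ℝ≥0∞))⁻¹

/-- The σ-algebra generated by the first `n` coordinates. -/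
def coordMS (n : ℕ) : MeasurableSpace (G m) :=
  MeasurableSpace.comap (fun x (i : Fin n) => x i) inferInstance

/-- `f = (f^{(n)})` is a martingale with respect to the filtration of coordinate σ-algebras. -/
def IsVMartingale (μ : Measure (G m)) (f : ℕ → G m → ℂ) : Prop :=
  (∀ n, Integrable (f n) μ) ∧ (∀ n, StronglyMeasurable[coordMS m n] (f n)) ∧
    ∀ n, μ[f (n + 1)|coordMS m n] =ᵐ[μ] f n

/-- `fhat` is the coefficient function of the martingale `f`. -/
def IsCoeff (μ : Measure (G m)) (f : ℕ → G m → ℂ) (fhat : ℕ → ℂ) : Prop :=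
  ∀ k i, i < Mgen m k → fhat i = ∫ x, f k x * (starRingEnd ℂ) (psi m i x) ∂μ

/-- The martingale Hardy space (quasi-)norm `‖f‖_{H_p} = (∫ (sup_n |f^{(n)}|)^p dμ)^{1/p}`. -/
def HardyNorm (μ : Measure (G m)) (p : ℝ) (f : ℕ → G m → ℂ) : ℝ≥0∞ :=
  (∫⁻ x, (⨆ n, ENNReal.ofReal ((‖·‖) (f n x))) ^ p ∂μ) ^ (1 / p)

/-- The Vilenkin–Fourier coefficients of an integrable function. -/
def fourierCoeff (μ : Measure (G m)) (f : G m → ℂ) (n : ℕ) : ℂ :=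
  ∫ x, f x * (starRingEnd ℂ) (psi m n x) ∂μ

/-- The Fejér means `σ_n f = (1/n) ∑_{k=1}^n S_k f`. -/
def sigmaMean (fhat : ℕ → ℂ) (n : ℕ) (x : G m) : ℂ :=
  (1 / (n : ℂ)) * ∑ k ∈ Finset.Icc 1 n, partialSum m fhat k x

/-- The maximal Fejér operator `σ^* f = sup_{n ≥ 1} |σ_n f|`. -/
def sigmaStar (fhat : ℕ → ℂ) (x : G m) : ℝ≥0∞ :=
  ⨆ (n : ℕ) (_ : 1 ≤ n), ENNReal.ofReal ((‖·‖) (sigmaMean m fhat n x))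

/-- `l_n := ∑_{k=1}^{n-1} 1/k`. -/
def lsum (n : ℕ) : ℝ := ∑ k ∈ Finset.Icc 1 (n - 1), (1 : ℝ) / k

/-- The Riesz logarithmic means `R_n f = (1/l_n) ∑_{k=1}^{n-1} S_k f / k`. -/
def Riesz (fhat : ℕ → ℂ) (n : ℕ) (x : G m) : ℂ :=
  (1 / (lsum n : ℂ)) * ∑ k ∈ Finset.Icc 1 (n - 1), partialSum m fhat k x / (k : ℂ)

/-- The maximal Riesz operator `R^* f = sup_{n ≥ 2} |R_n f|`. -/
def RieszStar (fhat : ℕ → ℂ) (x : G m) : ℝ≥0∞ :=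
  ⨆ (n : ℕ) (_ : 2 ≤ n), ENNReal.ofReal ((‖·‖) (Riesz m fhat n x))

/-- The Cesàro numbers `A_n^α = ∏_{j=1}^n (α+j)/j`. -/
def Aces (α : ℝ) (n : ℕ) : ℝ := ∏ j ∈ Finset.Icc 1 n, (α + j) / j

/-- The means `U_n^α f = (1/A_n^α) ∑_{k=0}^{n-1} A_k^{α-1} S_k f`. -/
def Umean (α : ℝ) (fhat : ℕ → ℂ) (n : ℕ) (x : G m) : ℂ :=
  (1 / (Aces α n : ℂ)) * ∑ k ∈ Finset.range n, (Aces (α - 1) k : ℂ) * partialSum m fhat k x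

/-- The maximal operator `U^{α,*} f = sup_{n ≥ 1} |U_n^α f|`. -/
def Ustar (α : ℝ) (fhat : ℕ → ℂ) (x : G m) : ℝ≥0∞ :=
  ⨆ (n : ℕ) (_ : 1 ≤ n), ENNReal.ofReal ((‖·‖) (Umean m α fhat n x))

/-- The weights `q_0 = 1`, `q_k = k^{α-1}` generating the means `V_n^α`. -/
def qV (α : ℝ) (k : ℕ) : ℝ := if k = 0 then 1 else (k : ℝ) ^ (α - 1)

/-- The weights `q_k = max(0, log^{(β)}(k^α))` generating the means `B_n^{α,β}`. -/
def qB (α : ℝ) (β : ℕ) (k : ℕ) : ℝ := max 0 (Real.log^[β] ((k : ℝ) ^ α))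

/-- The maximal operator `B^{α,β,*} f = sup_{n : Q_n > 0} |B_n^{α,β} f|`. -/
def Bstar (α : ℝ) (β : ℕ) (fhat : ℕ → ℂ) (x : G m) : ℝ≥0∞ :=
  ⨆ (n : ℕ) (_ : 0 < Qsum (qB α β) n), ENNReal.ofReal ((‖·‖) (Tmean m (qB α β) fhat n x))

open Classical in
/-- The coefficient function `ĉ` of the counterexample martingale:
`ĉ(v) = M_{α_k}^{1/p-1}/α_k` for `M_{α_k} ≤ v < M_{α_k + 1}`, and `0` otherwise. -/
def chat (p : ℝ) (a : ℕ → ℕ) (v : ℕ) : ℝ :=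
  if h : ∃ k, Mgen m (a k) ≤ v ∧ v < Mgen m (a k + 1) then
    (Mgen m (a h.choose) : ℝ) ^ (1 / p - 1) / (a h.choose : ℝ)
  else 0

/-- For a non-decreasing nonnegative weight sequence `q` with `q 0 > 0`
satisfying `n q_{n-1} ≤ A Q_n` and any integrable `f`, one has `|T_n f| ≤ 2A σ^* f` pointwise
for all `n ≥ 1`, hence `T^* f ≤ 2A σ^* f`. -/
theorem Tmean_le_sigmaStar_nondecreasing
    (m : ℕ → ℕ) (hm : ∀ k, 2 ≤ m k) (hbdd : ∃ Λ : ℕ, ∀ k, m k ≤ Λ)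
    (μ : Measure (G m)) (hμ : IsHaar m μ)
    (q : ℕ → ℝ) (hq : ∀ k, 0 ≤ q k) (hq0 : 0 < q 0) (hmono : Monotone q)
    (A : ℝ) (hA : 0 < A) (hAq : ∀ n : ℕ, 1 ≤ n → (n : ℝ) * q (n - 1) ≤ A * Qsum q n)
    (f : G m → ℂ) (hf : Integrable f μ) :
    (∀ n : ℕ, 1 ≤ n → ∀ x : G m,
        ENNReal.ofReal ((‖·‖) (Tmean m q (fourierCoeff m μ f) n x)) ≤
          ENNReal.ofReal (2 * A) * sigmaStar m (fourierCoeff m μ f) x) ∧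
      ∀ x : G m, Tstar m q (fourierCoeff m μ f) x ≤
        ENNReal.ofReal (2 * A) * sigmaStar m (fourierCoeff m μ f) x := by
  set c := fourierCoeff m μ f with hc
  have key : ∀ n : ℕ, 1 ≤ n → ∀ x : G m,
      ENNReal.ofReal (‖Tmean m q c n x‖) ≤
        ENNReal.ofReal (2 * A) * sigmaStar m c x := by
    intro n hn x
    by_cases hfin : sigmaStar m c x = ⊤
    · rw [hfin, ENNReal.mul_top (by simpa using by positivity : ENNReal.ofReal (2 * A) ≠ 0)]
      exact le_top
    set B := (sigmaStar m c x).toReal with hB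
    have hB0 : 0 ≤ B := ENNReal.toReal_nonneg
    have hσ : ∀ k, 1 ≤ k → ‖sigmaMean m c k x‖ ≤ B := by
      intro k hk
      have h1 : ENNReal.ofReal (‖sigmaMean m c k x‖) ≤ sigmaStar m c x :=
        le_iSup₂ (f := fun (n : ℕ) (_ : 1 ≤ n) =>
          ENNReal.ofReal (‖sigmaMean m c n x‖)) k hk
      exact (ENNReal.ofReal_le_iff_le_toReal hfin).mp h1
    -- notation
    set S : ℕ → ℂ := fun k => partialSum m c k x with hS
    set Gs : ℕ → ℂ := fun k => ∑ j ∈ Finset.range k, S j with hGs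
    have hS0 : S 0 = 0 := by simp [hS, partialSum]
    have hGabs : ∀ i : ℕ, ‖Gs (i + 1)‖ ≤ (i : ℝ) * B := by
      intro i
      rcases Nat.eq_zero_or_pos i with hi | hi
      · subst hi; simp [hGs, hS0]
      have hGi : Gs (i + 1) = ∑ j ∈ Finset.Icc 1 i, S j := by
        show ∑ j ∈ Finset.range (i + 1), S j = _
        rw [Finset.range_eq_Ico, Finset.sum_eq_sum_Ico_succ_bot (Nat.succ_pos i), hS0,
          zero_add, Nat.succ_eq_add_one, Finset.Ico_add_one_right_eq_Icc]
      have hσi : sigmaMean m c i x = (1 / (i : ℂ)) * Gs (i + 1) := by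
        rw [hGi]; rfl
      have hine : (i : ℂ) ≠ 0 := Nat.cast_ne_zero.mpr hi.ne'
      have : Gs (i + 1) = (i : ℂ) * sigmaMean m c i x := by
        rw [hσi]; field_simp
      rw [this, norm_mul]
      simp only [Complex.norm_natCast]
      exact mul_le_mul_of_nonneg_left (hσ i hi) (Nat.cast_nonneg i)
    -- Abel summation
    have habel := Finset.sum_range_by_parts (fun i => ((q i : ℝ) : ℂ)) S n
    simp only [smul_eq_mul] at habel
    -- bound on the numerator
    have hQpos : 0 < Qsum q n := by
      have : q 0 ≤ Qsum q n :=
        Finset.single_le_sum (f := q) (fun k _ => hq k)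
          (Finset.mem_range.mpr (by omega))
      linarith
    have hnum : ‖∑ i ∈ Finset.range n, ((q i : ℝ) : ℂ) * S i‖ ≤
        2 * A * Qsum q n * B := by
      have hGn : Gs n = Gs ((n - 1) + 1) := by rw [Nat.sub_add_cancel hn]
      have h1 : ‖((q (n - 1) : ℝ) : ℂ) * Gs n‖ ≤ q (n - 1) * ((n - 1 : ℕ) * B) := by
        rw [norm_mul, Complex.norm_real, Real.norm_eq_abs, _root_.abs_of_nonneg (hq _), hGn]
        exact mul_le_mul_of_nonneg_left (hGabs (n - 1)) (hq _)
      have h2 : ‖∑ i ∈ Finset.range (n - 1),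
            (((q (i + 1) : ℝ) : ℂ) - ((q i : ℝ) : ℂ)) * Gs (i + 1)‖ ≤
          (q (n - 1) - q 0) * ((n - 1 : ℕ) * B) := by
        calc ‖∑ i ∈ Finset.range (n - 1),
              (((q (i + 1) : ℝ) : ℂ) - ((q i : ℝ) : ℂ)) * Gs (i + 1)‖
            ≤ ∑ i ∈ Finset.range (n - 1),
              ‖(((q (i + 1) : ℝ) : ℂ) - ((q i : ℝ) : ℂ)) * Gs (i + 1)‖ :=
              norm_sum_le _ _
          _ ≤ ∑ i ∈ Finset.range (n - 1), (q (i + 1) - q i) * ((n - 1 : ℕ) * B) := by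
              apply Finset.sum_le_sum
              intro i hi
              rw [norm_mul, ← Complex.ofReal_sub, Complex.norm_real, Real.norm_eq_abs,
                _root_.abs_of_nonneg (sub_nonneg.mpr (hmono (Nat.le_succ i)))]
              have hi' : (i : ℝ) ≤ ((n - 1 : ℕ) : ℝ) := by
                exact_mod_cast Nat.le_of_lt_succ (by
                  have := Finset.mem_range.mp hi; omega)
              exact mul_le_mul (le_refl _) ((hGabs i).trans
                (mul_le_mul_of_nonneg_right hi' hB0))
                (norm_nonneg _) (sub_nonneg.mpr (hmono (Nat.le_succ i)))
          _ = (q (n - 1) - q 0) * ((n - 1 : ℕ) * B) := by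
              rw [← Finset.sum_mul, Finset.sum_range_sub q]
      have hq0n : 0 ≤ q (n - 1) := hq _
      have hchain : q (n - 1) * ((n - 1 : ℕ) * B) + (q (n - 1) - q 0) * ((n - 1 : ℕ) * B) ≤
          2 * A * Qsum q n * B := by
        have hstep : q (n - 1) * ((n - 1 : ℕ) * B) + (q (n - 1) - q 0) * ((n - 1 : ℕ) * B) ≤
            2 * (q (n - 1) * ((n : ℕ) * B)) := by
          have hn1 : ((n - 1 : ℕ) : ℝ) ≤ (n : ℝ) := by exact_mod_cast Nat.sub_le n 1
          have e1 : 0 ≤ q 0 * (((n - 1 : ℕ) : ℝ) * B) :=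
            mul_nonneg (le_of_lt hq0) (mul_nonneg (Nat.cast_nonneg _) hB0)
          have e2 : q (n - 1) * (((n - 1 : ℕ) : ℝ) * B) ≤ q (n - 1) * ((n : ℝ) * B) :=
            mul_le_mul_of_nonneg_left (mul_le_mul_of_nonneg_right hn1 hB0) hq0n
          linarith
        have hAqn : (n : ℝ) * q (n - 1) ≤ A * Qsum q n := hAq n hn
        nlinarith
      calc ‖∑ i ∈ Finset.range n, ((q i : ℝ) : ℂ) * S i‖
          ≤ ‖((q (n - 1) : ℝ) : ℂ) * Gs n‖ +
            ‖∑ i ∈ Finset.range (n - 1),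
              (((q (i + 1) : ℝ) : ℂ) - ((q i : ℝ) : ℂ)) * Gs (i + 1)‖ := by
            rw [habel]; exact (norm_sub_le _ _).trans (le_refl _)
        _ ≤ 2 * A * Qsum q n * B := by linarith
    -- conclude the real bound
    have hreal : ‖Tmean m q c n x‖ ≤ 2 * A * B := by
      have : Tmean m q c n x =
          (1 / ((Qsum q n : ℝ) : ℂ)) * ∑ i ∈ Finset.range n, ((q i : ℝ) : ℂ) * S i := rfl
      rw [this, norm_mul, norm_div, norm_one, Complex.norm_real, Real.norm_eq_abs, _root_.abs_of_pos hQpos]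
      rw [div_mul_eq_mul_div, one_mul, div_le_iff₀ hQpos]
      calc ‖∑ i ∈ Finset.range n, ((q i : ℝ) : ℂ) * S i‖
          ≤ 2 * A * Qsum q n * B := hnum
        _ = 2 * A * B * Qsum q n := by ring
    calc ENNReal.ofReal (‖Tmean m q c n x‖)
        ≤ ENNReal.ofReal (2 * A * B) := ENNReal.ofReal_le_ofReal hreal
      _ = ENNReal.ofReal (2 * A) * ENNReal.ofReal B := ENNReal.ofReal_mul (by positivity)
      _ = ENNReal.ofReal (2 * A) * sigmaStar m c x := by
          rw [hB, ENNReal.ofReal_toReal hfin]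
  refine ⟨key, fun x => ?_⟩
  exact iSup₂_le fun n hn => key n hn x

end VilenkinT
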